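/- Suppose F ⊆ ∏_{i<κ} λ_i, J is an ℵ₁-complete ideal on κ, distinct members of F are distinct modulo J (f ≠ g in F implies {i : f(i) = g(i)} ∈ J), and |F| ≥ θ where cf(θ) > 2^κ. Then there exists g* ∈ ∏_{i<κ}(λ_i + 1) such that: (a) Y = {f ∈ F : f <_J g*} has cardinality ≥ θ; (b) for every f' <_J g*, the set {f ∈ F : f ≤_J f'} has cardinality < θ; and (c) there are f_α ∈ Y for α < θ with f_α <_J g* and for α < β < θ, not f_β ≤_J f_α. -/

import Mathlib

open Cardinal Set

/-- Auxiliary: modulo an ℵ₁-complete proper ideal, there is no ω-sequence of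
functions to ordinals which is "descending off a `J`-set at each step". -/
lemma aux_no_desc {ι : Type} {J : Set (Set ι)} (hJuniv : Set.univ ∉ J)
    (hcompl : ∀ g : ℕ → Set ι, (∀ n, g n ∈ J) → (⋃ n, g n) ∈ J)
    (x : ℕ → ι → Ordinal.{0}) (g : ℕ → Set ι) (hg : ∀ n, g n ∈ J)
    (hdesc : ∀ n, ∀ i, i ∉ g n → x (n + 1) i < x n i) : False := by
  have hU : (⋃ n, g n) ∈ J := hcompl g hg
  have hne : (⋃ n, g n) ≠ Set.univ := fun h => hJuniv (h ▸ hU)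
  obtain ⟨i, hi⟩ := (Set.ne_univ_iff_exists_notMem _).1 hne
  have hi' : ∀ n, i ∉ g n := fun n hn => hi (Set.mem_iUnion.2 ⟨n, hn⟩)
  exact (RelEmbedding.natGT (fun n => x n i)
    (fun n => hdesc n i (hi' n))).not_wellFounded Ordinal.lt_wf

/-- Observation 1.24: for `F ⊆ ∏_i λ_i` of size `≥ θ`,
`cf(θ) > 2^κ`, with distinct members distinct modulo an ℵ₁-complete ideal
`J`, there is `g* ∈ ∏_i (λ_i + 1)` such that `Y = {f ∈ F : f <_J g*}` has
size `≥ θ`, every `f' <_J g*` has fewer than `θ` members of `F` below it,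
and there is a `θ`-sequence in `Y` with no later member `≤_J` an earlier
one. -/
theorem exists_bounding_function {ι : Type} (lams : ι → Cardinal.{0})
    (J : Set (Set ι))
    (hJ : ∅ ∈ J ∧ (∀ s t : Set ι, s ⊆ t → t ∈ J → s ∈ J) ∧
      (∀ s t : Set ι, s ∈ J → t ∈ J → s ∪ t ∈ J) ∧ Set.univ ∉ J)
    (hcompl : ∀ g : ℕ → Set ι, (∀ n, g n ∈ J) → (⋃ n, g n) ∈ J)
    (F : Set (ι → Ordinal.{0}))
    (hF : ∀ f ∈ F, ∀ i, f i < (lams i).ord)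
    (hdist : ∀ f ∈ F, ∀ g ∈ F, f ≠ g → {i | f i = g i} ∈ J)
    (θ : Cardinal.{0})
    (hθ : Cardinal.lift.{1,0} θ ≤ #F)
    (hcof : 2 ^ #ι < θ.ord.cof) :
    ∃ g' : ι → Ordinal.{0},
      (∀ i, g' i ≤ (lams i).ord) ∧
      Cardinal.lift.{1,0} θ ≤ #{f | f ∈ F ∧ {i | g' i ≤ f i} ∈ J} ∧
      (∀ f' : ι → Ordinal.{0}, {i | g' i ≤ f' i} ∈ J →
        #{f | f ∈ F ∧ {i | f' i < f i} ∈ J} < Cardinal.lift.{1,0} θ) ∧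
      ∃ h : Ordinal.{0} → ι → Ordinal.{0},
        (∀ α < θ.ord, h α ∈ F ∧ {i | g' i ≤ h α i} ∈ J) ∧
        (∀ α β, α < β → β < θ.ord → ¬ ({i | h α i < h β i} ∈ J)) := by
  classical
  obtain ⟨hJ0, hJdown, hJun, hJuniv⟩ := hJ
  -- θ is infinite
  have hθinf : ℵ₀ ≤ θ := by
    rcases Ordinal.zero_or_succ_or_isSuccLimit θ.ord with h | ⟨a, h⟩ | h
    · rw [h, Ordinal.cof_zero] at hcof
      exact absurd hcof (Cardinal.zero_le _).not_gt
    · rw [← h, Ordinal.cof_succ] at hcof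
      have h1 : (1 : Cardinal) ≤ 2 ^ #ι :=
        Cardinal.one_le_iff_ne_zero.2 (Cardinal.power_ne_zero _ (by norm_num))
      exact absurd hcof h1.not_gt
    · exact (Ordinal.aleph0_le_cof.2 h).trans (Ordinal.cof_ord_le θ)
  have haleph : (ℵ₀ : Cardinal.{1}) ≤ Cardinal.lift.{1,0} θ := by
    rw [← Cardinal.lift_aleph0.{1,0}]
    exact Cardinal.lift_le.2 hθinf
  -- the strict order `<_J` is well-founded
  set ltJ : (ι → Ordinal.{0}) → (ι → Ordinal.{0}) → Prop :=
    fun a b => {i | b i ≤ a i} ∈ J with hltJ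
  haveI : IsIrrefl (ι → Ordinal.{0}) ltJ := by
    constructor
    intro a hA
    have huniv : {i | a i ≤ a i} = (Set.univ : Set ι) := by
      ext i; simp
    rw [hltJ] at hA
    simp only [huniv] at hA
    exact hJuniv hA
  haveI : IsTrans (ι → Ordinal.{0}) ltJ := by
    constructor
    intro a b c hab hbc
    refine hJdown _ ({i | b i ≤ a i} ∪ {i | c i ≤ b i}) ?_ (hJun _ _ hab hbc)
    intro i (hi : c i ≤ a i)
    by_cases h : b i ≤ a i
    · exact Or.inl h
    · exact Or.inr (hi.trans (not_le.1 h).le)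
  haveI : IsStrictOrder (ι → Ordinal.{0}) ltJ := ⟨⟩
  have hwf : WellFounded ltJ := by
    rw [RelEmbedding.wellFounded_iff_isEmpty]
    constructor
    intro f
    refine aux_no_desc hJuniv hcompl (fun n => f n)
      (fun n => {i | f n i ≤ f (n + 1) i}) (fun n => ?_) (fun n i hi => lt_of_not_ge hi)
    exact f.map_rel_iff.2 (Nat.lt_succ_self n)
  -- a minimal element of `S`
  have hS0mem : (fun i => (lams i).ord) ∈
      {g : ι → Ordinal.{0} | (∀ i, g i ≤ (lams i).ord) ∧
        Cardinal.lift.{1,0} θ ≤ #{f | f ∈ F ∧ {i | g i ≤ f i} ∈ J}} := by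
    refine ⟨fun i => le_rfl, le_trans hθ (Cardinal.mk_le_mk_of_subset ?_)⟩
    intro f hf
    refine ⟨hf, ?_⟩
    have he : {i | (fun i => (lams i).ord) i ≤ f i} = (∅ : Set ι) := by
      ext i
      simp only [Set.mem_setOf_eq, Set.mem_empty_iff_false, iff_false]
      exact fun h => (hF f hf i).not_ge h
    rw [he]; exact hJ0
  obtain ⟨gs, hgsS, hgsmin⟩ := hwf.has_min _ ⟨_, hS0mem⟩
  refine ⟨gs, hgsS.1, hgsS.2, ?_, ?_⟩
  · -- part (b)
    intro f' hN
    by_contra hbig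
    push_neg at hbig
    set t : (ι → Ordinal.{0}) → Set ι := fun f => {i | f' i ≤ f i} with ht
    -- find a large fiber
    obtain ⟨t₀, ht₀⟩ : ∃ s : Set ι, Cardinal.lift.{1,0} θ ≤
        #{f | (f ∈ F ∧ {i | f' i < f i} ∈ J) ∧ t f = s} := by
      by_contra hno
      push_neg at hno
      have hcover : {f | f ∈ F ∧ {i | f' i < f i} ∈ J} ⊆
          ⋃ (s : ULift.{1,0} (Set ι)), {f | (f ∈ F ∧ {i | f' i < f i} ∈ J) ∧ t f = s.down} :=
        fun f hf => Set.mem_iUnion.2 ⟨⟨t f⟩, hf, rfl⟩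
      have h1 := (Cardinal.mk_le_mk_of_subset hcover).trans (Cardinal.mk_iUnion_le _)
      have hsup : ⨆ s : ULift.{1,0} (Set ι),
          #{f | (f ∈ F ∧ {i | f' i < f i} ∈ J) ∧ t f = s.down} < Cardinal.lift.{1,0} θ := by
        refine Ordinal.iSup_lt ?_ fun s => hno s.down
        rw [Cardinal.mk_uLift, Cardinal.mk_set, ← Cardinal.lift_ord, ← Ordinal.lift_cof]
        exact Cardinal.lift_lt.2 hcof
      have hidx : #(ULift.{1,0} (Set ι)) < Cardinal.lift.{1,0} θ := by
        rw [Cardinal.mk_uLift, Cardinal.mk_set]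
        exact Cardinal.lift_lt.2 (hcof.trans_le (Ordinal.cof_ord_le θ))
      have hmul := Cardinal.mul_lt_of_lt haleph hidx hsup
      exact (h1.trans_lt hmul).not_ge hbig
    -- two distinct members of the fiber
    have hnt : Nontrivial ↥{f | (f ∈ F ∧ {i | f' i < f i} ∈ J) ∧ t f = t₀} :=
      Cardinal.one_lt_iff_nontrivial.1
        (Cardinal.one_lt_aleph0.trans_le (haleph.trans ht₀))
    obtain ⟨⟨a, ha⟩, ⟨b, hb⟩, hab⟩ := hnt.exists_pair_ne
    have hab' : a ≠ b := fun h => hab (Subtype.ext h)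
    -- the common excess set is in J
    have ht₀J : t₀ ∈ J := by
      refine hJdown _ (({i | f' i < a i} ∪ {i | f' i < b i}) ∪ {i | a i = b i}) ?_
        (hJun _ _ (hJun _ _ ha.1.2 hb.1.2) (hdist a ha.1.1 b hb.1.1 hab'))
      intro i hi
      have hia : f' i ≤ a i := by
        have : i ∈ t a := by rw [ha.2]; exact hi
        exact this
      have hib : f' i ≤ b i := by
        have : i ∈ t b := by rw [hb.2]; exact hi
        exact this
      by_cases h1 : f' i < a i
      · exact Or.inl (Or.inl h1)
      · by_cases h2 : f' i < b i
        · exact Or.inl (Or.inr h2)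
        · have e1 : a i = f' i := le_antisymm (not_lt.1 h1) hia
          have e2 : b i = f' i := le_antisymm (not_lt.1 h2) hib
          exact Or.inr (e1.trans e2.symm)
    -- the decreased candidate
    set g₁ : ι → Ordinal.{0} := fun i => if i ∈ t₀ then gs i else min (f' i) (gs i) with hg₁
    have hg₁mem : g₁ ∈
        {g : ι → Ordinal.{0} | (∀ i, g i ≤ (lams i).ord) ∧
          Cardinal.lift.{1,0} θ ≤ #{f | f ∈ F ∧ {i | g i ≤ f i} ∈ J}} := by
      constructor
      · intro i
        by_cases hit : i ∈ t₀
        · show (if i ∈ t₀ then gs i else min (f' i) (gs i)) ≤ _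
          rw [if_pos hit]; exact hgsS.1 i
        · show (if i ∈ t₀ then gs i else min (f' i) (gs i)) ≤ _
          rw [if_neg hit]; exact (min_le_right _ _).trans (hgsS.1 i)
      · refine ht₀.trans (Cardinal.mk_le_mk_of_subset ?_)
        rintro f ⟨⟨hfF, hfJ⟩, hft⟩
        refine ⟨hfF, hJdown _ (t₀ ∪ {i | gs i ≤ f' i}) ?_ (hJun _ _ ht₀J hN)⟩
        intro i hgi
        by_cases hit : i ∈ t₀
        · exact Or.inl hit
        · have hgi' : (if i ∈ t₀ then gs i else min (f' i) (gs i)) ≤ f i := hgi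
          rw [if_neg hit] at hgi'
          have hff' : ¬ f' i ≤ f i := fun hle => hit (by rw [← hft]; exact hle)
          rcases min_le_iff.1 hgi' with h | h
          · exact absurd h hff'
          · exact Or.inr (h.trans (lt_of_not_ge hff').le)
    have hlt : ltJ g₁ gs := by
      refine hJdown _ (t₀ ∪ {i | gs i ≤ f' i}) ?_ (hJun _ _ ht₀J hN)
      intro i hi
      by_cases hit : i ∈ t₀
      · exact Or.inl hit
      · have hi' : gs i ≤ (if i ∈ t₀ then gs i else min (f' i) (gs i)) := hi
        rw [if_neg hit] at hi'
        exact Or.inr (hi'.trans (min_le_left _ _))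
    exact hgsmin g₁ hg₁mem hlt
  · -- part (c)
    set Y := {f | f ∈ F ∧ {i | gs i ≤ f i} ∈ J} with hYdef
    have hYcard : Cardinal.lift.{1,0} θ ≤ #Y := hgsS.2
    set r : ↥Y → ↥Y → Prop := fun a b =>
      {i | (b : ι → Ordinal.{0}) i < (a : ι → Ordinal.{0}) i} ∈ J ∧ a ≠ b with hrdef
    haveI : IsIrrefl (↥Y) r := ⟨fun a hA => hA.2 rfl⟩
    haveI : IsTrans (↥Y) r := by
      constructor
      intro a b c hab hbc
      constructor
      · refine hJdown _ ({i | (b : ι → Ordinal.{0}) i < (a : ι → Ordinal.{0}) i} ∪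
          {i | (c : ι → Ordinal.{0}) i < (b : ι → Ordinal.{0}) i}) ?_ (hJun _ _ hab.1 hbc.1)
        intro i (hi : (c : ι → Ordinal.{0}) i < (a : ι → Ordinal.{0}) i)
        by_cases h : (c : ι → Ordinal.{0}) i < (b : ι → Ordinal.{0}) i
        · exact Or.inr h
        · exact Or.inl ((not_lt.1 h).trans_lt hi)
      · intro hac
        subst hac
        have hcover : (Set.univ : Set ι) ⊆
            ({i | (b : ι → Ordinal.{0}) i < (a : ι → Ordinal.{0}) i} ∪
              {i | (a : ι → Ordinal.{0}) i < (b : ι → Ordinal.{0}) i}) ∪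
              {i | (a : ι → Ordinal.{0}) i = (b : ι → Ordinal.{0}) i} := by
          intro i _
          rcases lt_trichotomy ((a : ι → Ordinal.{0}) i) ((b : ι → Ordinal.{0}) i) with h | h | h
          · exact Or.inl (Or.inr h)
          · exact Or.inr h
          · exact Or.inl (Or.inl h)
        exact hJuniv (hJdown _ _ hcover
          (hJun _ _ (hJun _ _ hab.1 hbc.1)
            (hdist _ a.2.1 _ b.2.1 (fun h => hab.2 (Subtype.ext h)))))
    haveI : IsStrictOrder (↥Y) r := ⟨⟩
    have hwfr : WellFounded r := by
      rw [RelEmbedding.wellFounded_iff_isEmpty]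
      constructor
      intro x
      have hx : ∀ n, r (x (n + 1)) (x n) := fun n => x.map_rel_iff.2 (Nat.lt_succ_self n)
      refine aux_no_desc hJuniv hcompl (fun n => (x n : ι → Ordinal.{0}))
        (fun n => {i | (x n : ι → Ordinal.{0}) i < (x (n + 1) : ι → Ordinal.{0}) i} ∪
          {i | (x n : ι → Ordinal.{0}) i = (x (n + 1) : ι → Ordinal.{0}) i})
        (fun n => hJun _ _ (hx n).1
          (hdist _ (x n).2.1 _ (x (n + 1)).2.1
            (fun h => (hx n).2 (Subtype.ext h.symm)))) ?_
      intro n i hi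
      have h1 : ¬ (x n : ι → Ordinal.{0}) i < (x (n + 1) : ι → Ordinal.{0}) i :=
        fun h => hi (Or.inl h)
      have h2 : (x n : ι → Ordinal.{0}) i ≠ (x (n + 1) : ι → Ordinal.{0}) i :=
        fun h => hi (Or.inr h)
      exact lt_of_le_of_ne (not_lt.1 h1) (fun h => h2 h.symm)
    haveI : IsWellFounded ↥Y r := ⟨hwfr⟩
    obtain ⟨s, hrs, hswo⟩ := IsWellFounded.exists_well_order_ge r
    haveI := hswo
    have htype : ∀ α < θ.ord, Ordinal.lift.{1,0} α < Ordinal.type s := by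
      intro α hα
      have h1 : Ordinal.lift.{1,0} α < Ordinal.lift.{1,0} θ.ord := Ordinal.lift_lt.2 hα
      have h2 : Ordinal.lift.{1,0} θ.ord ≤ Ordinal.type s := by
        rw [Cardinal.lift_ord]
        exact Cardinal.ord_le.2 (by rw [Ordinal.card_type]; exact hYcard)
      exact h1.trans_le h2
    refine ⟨fun α => if hh : Ordinal.lift.{1,0} α < Ordinal.type s then
        ((Ordinal.enum s ⟨_, hh⟩ : ↥Y) : ι → Ordinal.{0}) else gs, fun α hα => ?_, ?_⟩
    · simp only [dif_pos (htype α hα)]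
      exact (Ordinal.enum s ⟨_, htype α hα⟩).2
    · intro α β hαβ hβ hmem
      have hα : α < θ.ord := hαβ.trans hβ
      simp only [dif_pos (htype α hα), dif_pos (htype β hβ)] at hmem
      have hsab : s (Ordinal.enum s ⟨_, htype α hα⟩) (Ordinal.enum s ⟨_, htype β hβ⟩) :=
        Ordinal.enum_lt_enum.2 (Subtype.mk_lt_mk.2 (Ordinal.lift_lt.2 hαβ))
      by_cases hab : Ordinal.enum s ⟨_, htype α hα⟩ = Ordinal.enum s ⟨_, htype β hβ⟩
      · rw [hab] at hsab
        exact hswo.toIsWellFounded.wf.asymmetric _ _ hsab hsab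
      · have hr : r (Ordinal.enum s ⟨_, htype β hβ⟩) (Ordinal.enum s ⟨_, htype α hα⟩) :=
          ⟨hmem, Ne.symm hab⟩
        exact hswo.toIsWellFounded.wf.asymmetric _ _ hsab (hrs _ _ hr)
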